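/- arXiv:1211.5031 — 5 statements merged into one kernel-verified Lean document; each statement's English description precedes it below -/
import Mathlib

section
/- For every odd natural number k, the complete graph K_{k+1} is k-edge-colorable, i.e., there is a proper edge coloring of K_{k+1} using at most k colors. -/
/-- A proper edge coloring of (the edges of) `G` using colors `< k`. -/
def IsProperEdgeColoring {V : Type*} (G : SimpleGraph V) (k : ℕ) (c : Sym2 V → ℕ) : Prop :=
  (∀ e ∈ G.edgeSet, c e < k) ∧
  ∀ e₁ ∈ G.edgeSet, ∀ e₂ ∈ G.edgeSet, e₁ ≠ e₂ → (∃ v, v ∈ e₁ ∧ v ∈ e₂) → c e₁ ≠ c e₂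

/-- Color of the edge `{a, b}` in `K_{k+1}` (vertices as naturals `≤ k`). -/
def edgeCol (k a b : ℕ) : ℕ :=
  if a = k then (2 * b) % k else if b = k then (2 * a) % k else (a + b) % k

lemma edgeCol_symm (k a b : ℕ) : edgeCol k a b = edgeCol k b a := by
  unfold edgeCol
  by_cases ha : a = k <;> by_cases hb : b = k <;> simp [ha, hb, Nat.add_comm]

lemma edgeCol_key (k : ℕ) (hk : Odd k) (a b b' : Fin (k + 1))
    (hab : a ≠ b) (hab' : a ≠ b') (hbb' : b ≠ b') :
    edgeCol k a.val b.val ≠ edgeCol k a.val b'.val := by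
  have hcop : Nat.Coprime 2 k := Nat.coprime_two_left.mpr hk
  have hA : a.val ≤ k := Nat.lt_succ_iff.mp a.isLt
  have hB : b.val ≤ k := Nat.lt_succ_iff.mp b.isLt
  have hB' : b'.val ≤ k := Nat.lt_succ_iff.mp b'.isLt
  have hvab : a.val ≠ b.val := fun h => hab (Fin.ext h)
  have hvab' : a.val ≠ b'.val := fun h => hab' (Fin.ext h)
  have hvbb' : b.val ≠ b'.val := fun h => hbb' (Fin.ext h)
  unfold edgeCol
  by_cases ha : a.val = k
  · -- edges to the hub vertex k; b, b' < k
    have hbk : b.val < k := by omega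
    have hb'k : b'.val < k := by omega
    rw [if_pos ha, if_pos ha]
    intro h
    have h2 : 2 * b.val ≡ 2 * b'.val [MOD k] := h
    have := (Nat.ModEq.cancel_left_of_coprime (by simpa using hcop) h2).eq_of_lt_of_lt hbk hb'k
    exact hvbb' this
  · have hak : a.val < k := lt_of_le_of_ne hA ha
    by_cases hb : b.val = k
    · have hb'k : b'.val < k := by omega
      rw [if_neg ha, if_pos hb, if_neg ha, if_neg (show ¬ b'.val = k by omega)]
      intro h
      have h2 : a.val + a.val ≡ a.val + b'.val [MOD k] := by
        simpa [two_mul, Nat.ModEq] using (h : (2 * a.val) % k = (a.val + b'.val) % k)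
      have := (Nat.ModEq.add_left_cancel' a.val h2).eq_of_lt_of_lt hak hb'k
      exact hvab' this
    · have hbk : b.val < k := lt_of_le_of_ne hB hb
      by_cases hb' : b'.val = k
      · rw [if_neg ha, if_neg hb, if_neg ha, if_pos hb']
        intro h
        have h2 : a.val + b.val ≡ a.val + a.val [MOD k] := by
          simpa [two_mul, Nat.ModEq] using (h : (a.val + b.val) % k = (2 * a.val) % k)
        have := (Nat.ModEq.add_left_cancel' a.val h2).eq_of_lt_of_lt hbk hak
        exact hvab this.symm
      · have hb'k : b'.val < k := lt_of_le_of_ne hB' hb'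
        rw [if_neg ha, if_neg hb, if_neg ha, if_neg hb']
        intro h
        have h2 : a.val + b.val ≡ a.val + b'.val [MOD k] := h
        have := (Nat.ModEq.add_left_cancel' a.val h2).eq_of_lt_of_lt hbk hb'k
        exact hvbb' this

/-- For every odd natural number `k`, the complete graph `K_{k+1}` is `k`-edge-colorable. -/
theorem stmt0 (k : ℕ) (hk : Odd k) :
    ∃ c : Sym2 (Fin (k + 1)) → ℕ,
      IsProperEdgeColoring (SimpleGraph.completeGraph (Fin (k + 1))) k c := by
  have hk0 : 0 < k := hk.pos
  refine ⟨Sym2.lift ⟨fun x y => edgeCol k x.val y.val,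
    fun x y => edgeCol_symm k x.val y.val⟩, ?_, ?_⟩
  · intro e he
    induction e using Sym2.ind with
    | _ x y =>
      simp only [Sym2.lift_mk]
      unfold edgeCol
      split_ifs <;> exact Nat.mod_lt _ hk0
  · rintro e₁ h₁ e₂ h₂ hne ⟨v, hv1, hv2⟩
    obtain ⟨b, rfl⟩ := Sym2.mem_iff_exists.mp hv1
    obtain ⟨b', rfl⟩ := Sym2.mem_iff_exists.mp hv2
    have hvb : v ≠ b := by
      intro h; subst h
      simp [SimpleGraph.mem_edgeSet, SimpleGraph.completeGraph] at h₁
    have hvb' : v ≠ b' := by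
      intro h; subst h
      simp [SimpleGraph.mem_edgeSet, SimpleGraph.completeGraph] at h₂
    have hbb' : b ≠ b' := by
      intro h; subst h; exact hne rfl
    simpa using edgeCol_key k hk v b b' hvb hvb' hbb'
end

section
/- For every even natural number k, the complete graph K_{k+1} has a k-edge-colorable subgraph with exactly k^2/2 edges; hence c_k(K_{k+1}) = k^2/2, where c_k(G) denotes the maximum number of edges of a k-edge-colorable subgraph of G. -/
/-- Endpoint set of an element of `Sym2 V`. -/
def endFinset {V : Type*} [DecidableEq V] : Sym2 V → Finset V :=
  Sym2.lift ⟨fun a b => {a, b}, fun a b => by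
    ext x; simp [or_comm]⟩

lemma mem_endFinset {V : Type*} [DecidableEq V] (v : V) (e : Sym2 V) :
    v ∈ endFinset e ↔ v ∈ e := by
  induction e using Sym2.ind with
  | _ a b => simp [endFinset, Sym2.mem_iff]

lemma card_endFinset {V : Type*} [DecidableEq V] (e : Sym2 V) (he : ¬ e.IsDiag) :
    (endFinset e).card = 2 := by
  induction e using Sym2.ind with
  | _ a b =>
    rw [Sym2.mk_isDiag_iff] at he
    simp [endFinset, Finset.card_insert_of_notMem, he]

/-- Any `k`-edge-colorable graph on `k+1` vertices (`k` even) has at most `k^2/2` edges. -/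
lemma upper_bound (k : ℕ) (hk : Even k) (H : SimpleGraph (Fin (k + 1)))
    (hc : ∃ c, IsProperEdgeColoring H k c) : H.edgeSet.ncard ≤ k ^ 2 / 2 := by
  classical
  obtain ⟨c, hlt, hprop⟩ := hc
  rw [← SimpleGraph.coe_edgeFinset, Set.ncard_coe_finset]
  set E := H.edgeFinset with hE
  -- E decomposes into color classes
  have hsub : E ⊆ (Finset.range k).biUnion (fun t => E.filter (fun e => c e = t)) := by
    intro e he
    refine Finset.mem_biUnion.2 ⟨c e, Finset.mem_range.2 ?_, Finset.mem_filter.2 ⟨he, rfl⟩⟩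
    exact hlt e (SimpleGraph.mem_edgeFinset.1 he)
  have hclass : ∀ t, (E.filter (fun e => c e = t)).card ≤ k / 2 := by
    intro t
    set M := E.filter (fun e => c e = t) with hM
    have hdisj : ∀ e₁ ∈ M, ∀ e₂ ∈ M, e₁ ≠ e₂ →
        Disjoint (endFinset e₁) (endFinset e₂) := by
      intro e₁ h₁ e₂ h₂ hne
      rw [Finset.disjoint_left]
      intro v hv1 hv2
      obtain ⟨h₁e, h₁c⟩ := Finset.mem_filter.1 h₁
      obtain ⟨h₂e, h₂c⟩ := Finset.mem_filter.1 h₂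
      exact hprop e₁ (SimpleGraph.mem_edgeFinset.1 h₁e) e₂ (SimpleGraph.mem_edgeFinset.1 h₂e)
        hne ⟨v, (mem_endFinset v e₁).1 hv1, (mem_endFinset v e₂).1 hv2⟩ (h₁c.trans h₂c.symm)
    have hcard : (M.biUnion endFinset).card = 2 * M.card := by
      rw [Finset.card_biUnion hdisj]
      rw [Finset.sum_congr rfl (fun e he => card_endFinset e
        (H.not_isDiag_of_mem_edgeSet (SimpleGraph.mem_edgeFinset.1 (Finset.mem_filter.1 he).1)))]
      simp [mul_comm]; rfl
    have hle : (M.biUnion endFinset).card ≤ k + 1 := by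
      simpa using Finset.card_le_card (Finset.subset_univ (M.biUnion endFinset))
    obtain ⟨m, hm⟩ := hk
    omega
  calc E.card ≤ ((Finset.range k).biUnion (fun t => E.filter (fun e => c e = t))).card :=
        Finset.card_le_card hsub
    _ ≤ ∑ t ∈ Finset.range k, (E.filter (fun e => c e = t)).card := Finset.card_biUnion_le
    _ ≤ ∑ _t ∈ Finset.range k, k / 2 := Finset.sum_le_sum (fun t _ => hclass t)
    _ = k * (k / 2) := by simp [mul_comm]
    _ ≤ k ^ 2 / 2 := by
        obtain ⟨m, rfl⟩ := hk
        have h1 : (m + m) / 2 = m := by omega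
        have h2 : (m + m) ^ 2 = ((m + m) * m) * 2 := by ring
        rw [h1, h2, Nat.mul_div_cancel _ (by norm_num)]

/-- The extremal graph: `K_{k+1}` minus the color class `i + j ≡ k (mod k+1)`. -/
def Hgraph (k : ℕ) : SimpleGraph (Fin (k + 1)) where
  Adj i j := i ≠ j ∧ i + j ≠ Fin.last k
  symm := by
    constructor
    intro i j ⟨h1, h2⟩
    exact ⟨h1.symm, fun h => h2 ((add_comm i j).trans h)⟩
  loopless := ⟨fun i h => h.1 rfl⟩

instance (k : ℕ) : DecidableRel (Hgraph k).Adj := fun i j =>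
  inferInstanceAs (Decidable (_ ∧ _))

lemma Hgraph_adj (k : ℕ) (i j : Fin (k + 1)) :
    (Hgraph k).Adj i j ↔ i ≠ j ∧ i + j ≠ Fin.last k := Iff.rfl

/-- For even `k`, `K_{k+1}` has a `k`-edge-colorable subgraph with exactly `k^2/2` edges;
hence the maximum number of edges of a `k`-edge-colorable subgraph equals `k^2/2`. -/
theorem stmt2 (k : ℕ) (hk : Even k) :
    (∃ H : SimpleGraph (Fin (k + 1)), H ≤ SimpleGraph.completeGraph (Fin (k + 1)) ∧
      (∃ c, IsProperEdgeColoring H k c) ∧ H.edgeSet.ncard = k ^ 2 / 2) ∧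
    (∀ H : SimpleGraph (Fin (k + 1)), H ≤ SimpleGraph.completeGraph (Fin (k + 1)) →
      (∃ c, IsProperEdgeColoring H k c) → H.edgeSet.ncard ≤ k ^ 2 / 2) := by
  classical
  refine ⟨?_, fun H _ hc => upper_bound k hk H hc⟩
  rcases Nat.eq_zero_or_pos k with rfl | hkpos
  · exact ⟨⊥, bot_le, ⟨fun _ => 0, by simp [IsProperEdgeColoring], by simp⟩, by simp⟩
  refine ⟨Hgraph k, fun i j h => h.1, ⟨Sym2.lift ⟨fun a b => (a + b).val,
    fun a b => congrArg Fin.val (add_comm a b)⟩, ?_, ?_⟩, ?_⟩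
  · -- colors < k
    intro e he
    induction e using Sym2.ind with
    | _ a b =>
      rw [SimpleGraph.mem_edgeSet, Hgraph_adj] at he
      have h1 : (a + b).val < k + 1 := (a + b).isLt
      have h2 : (a + b).val ≠ k := fun h => he.2 (Fin.ext h)
      show ((a + b : Fin (k + 1)) : ℕ) < k
      exact lt_of_le_of_ne (Nat.lt_succ_iff.1 h1) h2
  · -- properness
    rintro e₁ h₁ e₂ h₂ hne ⟨v, hv₁, hv₂⟩
    obtain ⟨b₁, rfl⟩ := Sym2.mem_iff_exists.1 hv₁
    obtain ⟨b₂, rfl⟩ := Sym2.mem_iff_exists.1 hv₂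
    simp only [Sym2.lift_mk]
    intro hcc
    have : v + b₁ = v + b₂ := Fin.ext hcc
    exact hne (by rw [add_left_cancel this])
  · -- edge count
    rw [← SimpleGraph.coe_edgeFinset, Set.ncard_coe_finset]
    have hdeg : ∀ i : Fin (k + 1), (Hgraph k).degree i =
        (k + 1) - ({i, Fin.last k - i} : Finset _).card := by
      intro i
      have hnb : (Hgraph k).neighborFinset i = Finset.univ \ {i, Fin.last k - i} := by
        ext j
        simp only [SimpleGraph.mem_neighborFinset, Hgraph_adj, Finset.mem_sdiff,
          Finset.mem_univ, Finset.mem_insert, Finset.mem_singleton, true_and]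
        constructor
        · rintro ⟨h1, h2⟩
          push_neg
          refine ⟨fun h => h1 h.symm, fun h => h2 ?_⟩
          rw [h]; abel
        · intro h
          push_neg at h
          exact ⟨fun hh => h.1 hh.symm, fun hh => h.2 (by rw [← hh]; abel)⟩
      rw [SimpleGraph.degree, hnb, Finset.card_sdiff_of_subset (Finset.subset_univ _)]
      simp
    have hfix : ∀ i : Fin (k + 1), Fin.last k - i = i ↔ i = (⟨k / 2, by omega⟩ : Fin (k + 1)) := by
      intro i
      rw [eq_comm, eq_sub_iff_add_eq]
      obtain ⟨m, hm⟩ := hk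
      constructor
      · intro h2
        have hv : (i.val + i.val) % (k + 1) = k := by
          have := congrArg Fin.val h2
          simpa [Fin.add_def, Fin.last] using this
        have hlt := i.isLt
        apply Fin.ext
        show i.val = k / 2
        rcases Nat.lt_or_ge (i.val + i.val) (k + 1) with h | h
        · rw [Nat.mod_eq_of_lt h] at hv; omega
        · rw [Nat.mod_eq_sub_mod h, Nat.mod_eq_of_lt (by omega)] at hv; omega
      · intro h
        subst h
        apply Fin.ext
        show (k / 2 + k / 2) % (k + 1) = k
        rw [Nat.mod_eq_of_lt (by omega)]
        omega
    have hcard : ∀ i : Fin (k + 1), ({i, Fin.last k - i} : Finset _).card =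
        if i = (⟨k / 2, by omega⟩ : Fin (k + 1)) then 1 else 2 := by
      intro i
      by_cases h : i = (⟨k / 2, by omega⟩ : Fin (k + 1))
      · rw [if_pos h, (hfix i).2 h]
        simp
      · rw [if_neg h, Finset.card_insert_of_notMem (by
          simp only [Finset.mem_singleton]
          exact fun hh => h ((hfix i).1 hh.symm)), Finset.card_singleton]
    have hstep : ∀ i : Fin (k + 1), (Hgraph k).degree i =
        (k - 1) + (if i = (⟨k / 2, by omega⟩ : Fin (k + 1)) then 1 else 0) := by
      intro i
      rw [hdeg, hcard]
      by_cases h : i = (⟨k / 2, by omega⟩ : Fin (k + 1)) <;> simp [h] <;> omega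
    have hsum : ∑ i : Fin (k + 1), (Hgraph k).degree i = k ^ 2 := by
      rw [Finset.sum_congr rfl (fun i _ => hstep i), Finset.sum_add_distrib,
        Finset.sum_const, Finset.sum_ite_eq' Finset.univ (⟨k / 2, by omega⟩ : Fin (k + 1)) (fun _ => 1)]
      simp only [Finset.card_univ, Fintype.card_fin, smul_eq_mul, Finset.mem_univ, if_pos]
      obtain ⟨n, rfl⟩ := Nat.exists_eq_succ_of_ne_zero hkpos.ne'
      simp only [Nat.succ_sub_one, Nat.succ_eq_add_one]
      ring
    have h2 := SimpleGraph.sum_degrees_eq_twice_card_edges (Hgraph k)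
    rw [hsum] at h2
    omega
end

section
/- For every even natural number k ≥ 2, there is a maximum k-edge-colorable subgraph of K_{k+1} (with k^2/2 edges) whose complement within E(K_{k+1}) is a matching. -/
/-- For even `k ≥ 2`, there is a maximum `k`-edge-colorable subgraph of `K_{k+1}`
(with `k^2/2` edges) whose complement within `E(K_{k+1})` is a matching. -/
theorem stmt3 (k : ℕ) (hk : Even k) (hk2 : 2 ≤ k) :
    ∃ H : SimpleGraph (Fin (k + 1)), H ≤ SimpleGraph.completeGraph (Fin (k + 1)) ∧
      (∃ c, IsProperEdgeColoring H k c) ∧ H.edgeSet.ncard = k ^ 2 / 2 ∧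
      ∀ e₁ ∈ (SimpleGraph.completeGraph (Fin (k + 1))).edgeSet \ H.edgeSet,
        ∀ e₂ ∈ (SimpleGraph.completeGraph (Fin (k + 1))).edgeSet \ H.edgeSet,
          e₁ ≠ e₂ → ∀ v, ¬(v ∈ e₁ ∧ v ∈ e₂) := by
  classical
  obtain ⟨m, hm⟩ : ∃ m, k = 2 * m := hk.exists_two_nsmul k
  -- the graph: complete graph minus the edges with zero sum
  let H : SimpleGraph (Fin (k + 1)) :=
    { Adj := fun a b => a ≠ b ∧ a + b ≠ 0
      symm := ⟨fun a b h => ⟨h.1.symm, fun hz => h.2 ((add_comm a b).trans hz)⟩⟩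
      loopless := ⟨fun a h => h.1 rfl⟩ }
  haveI : DecidableRel H.Adj := fun a b => instDecidableAnd
  have hAdj : ∀ a b : Fin (k+1), H.Adj a b ↔ a ≠ b ∧ a + b ≠ 0 := fun _ _ => Iff.rfl
  -- key fact: v ≠ -v for v ≠ 0 (k+1 is odd)
  have h2v : ∀ v : Fin (k + 1), v ≠ 0 → v ≠ -v := by
    intro v hv h
    have hvv : v + v = 0 := by nth_rewrite 2 [h]; exact add_neg_cancel v
    have hval : ((v : ℕ) + (v : ℕ)) % (k + 1) = 0 := by
      have := congrArg Fin.val hvv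
      rwa [Fin.val_add, Fin.val_zero] at this
    have hdvd : (k + 1) ∣ (v : ℕ) + (v : ℕ) := Nat.dvd_of_mod_eq_zero hval
    obtain ⟨t, ht⟩ := hdvd
    have hlt : (v : ℕ) < k + 1 := v.is_lt
    have ht2 : t < 2 := by
      by_contra hc
      push_neg at hc
      have : (k + 1) * 2 ≤ (k + 1) * t := Nat.mul_le_mul_left _ hc
      omega
    interval_cases t
    · simp at ht
      have hv0 : (v : ℕ) = 0 := by omega
      exact hv (Fin.ext (by rw [hv0, Fin.val_zero]))
    · omega
  -- the sum function on edges
  let sumc : Sym2 (Fin (k + 1)) → Fin (k + 1) :=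
    Sym2.lift ⟨fun a b => a + b, fun a b => add_comm a b⟩
  have hsumc : ∀ a b : Fin (k+1), sumc s(a, b) = a + b := fun _ _ => rfl
  have hedge : ∀ e ∈ H.edgeSet, sumc e ≠ 0 := by
    intro e he
    induction e using Sym2.ind with
    | _ a b => exact he.2
  refine ⟨H, ?_, ⟨fun e => (sumc e).val - 1, ?_, ?_⟩, ?_, ?_⟩
  · intro a b hab
    exact hab.1
  · -- colors < k
    intro e he
    have h1 : sumc e ≠ 0 := hedge e he
    have h2 : (sumc e : ℕ) ≠ 0 := fun h => h1 (Fin.ext (by simp [h]))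
    have h3 : (sumc e : ℕ) < k + 1 := (sumc e).is_lt
    show (sumc e : ℕ) - 1 < k
    omega
  · -- properness
    intro e₁ h₁ e₂ h₂ hne ⟨v, hv1, hv2⟩ hc
    have he1 := Sym2.other_spec hv1
    have he2 := Sym2.other_spec hv2
    have hs1 : sumc e₁ = v + (Sym2.Mem.other hv1) := (congrArg sumc he1).symm
    have hs2 : sumc e₂ = v + (Sym2.Mem.other hv2) := (congrArg sumc he2).symm
    have hz1 : (sumc e₁ : ℕ) ≠ 0 := fun h => hedge e₁ h₁ (Fin.ext (by simp [h]))
    have hz2 : (sumc e₂ : ℕ) ≠ 0 := fun h => hedge e₂ h₂ (Fin.ext (by simp [h]))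
    have hc' : (sumc e₁ : ℕ) - 1 = (sumc e₂ : ℕ) - 1 := hc
    have hvals : (sumc e₁ : ℕ) = (sumc e₂ : ℕ) := by omega
    have hss : v + (Sym2.Mem.other hv1) = v + (Sym2.Mem.other hv2) := by
      rw [← hs1, ← hs2]; exact Fin.ext hvals
    have hoo : (Sym2.Mem.other hv1) = (Sym2.Mem.other hv2) := add_left_cancel hss
    exact hne (by rw [← he1, ← he2, hoo])
  · -- edge count
    have hdeg : ∀ v : Fin (k + 1), H.degree v = (k - 1) + (if v = 0 then 1 else 0) := by
      intro v
      rw [SimpleGraph.degree]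
      by_cases hv : v = 0
      · subst hv
        have : H.neighborFinset 0 = Finset.univ.erase 0 := by
          rw [← Finset.filter_ne']
          ext j
          simp only [SimpleGraph.mem_neighborFinset, hAdj, Finset.mem_filter,
            Finset.mem_univ, true_and, zero_add]
          constructor
          · exact fun h => h.2
          · exact fun h => ⟨Ne.symm h, h⟩
        rw [this, Finset.card_erase_of_mem (Finset.mem_univ _), Finset.card_univ,
          Fintype.card_fin]
        rw [if_pos rfl]
        omega
      · have hkey : ∀ j : Fin (k+1), v + j = 0 ↔ j = -v := by
          intro j
          constructor
          · exact fun h => (neg_eq_of_add_eq_zero_right h).symm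
          · intro h; rw [h]; exact add_neg_cancel v
        have hset : H.neighborFinset v = Finset.univ \ {v, -v} := by
          ext j
          simp only [SimpleGraph.mem_neighborFinset, hAdj, Finset.mem_sdiff,
            Finset.mem_univ, true_and, Finset.mem_insert, Finset.mem_singleton]
          constructor
          · rintro ⟨h1, h2⟩ (h | h)
            · exact h1 h.symm
            · exact h2 ((hkey j).mpr h)
          · intro h
            push_neg at h
            exact ⟨fun hh => h.1 hh.symm, fun hz => h.2 ((hkey j).mp hz)⟩
        rw [hset, Finset.card_sdiff_of_subset (Finset.subset_univ _), Finset.card_univ,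
          Fintype.card_fin]
        have : ({v, -v} : Finset (Fin (k+1))).card = 2 := by
          rw [Finset.card_insert_of_notMem (by simpa using h2v v hv),
            Finset.card_singleton]
        rw [this]
        simp only [hv, if_false]
        omega
    have hsum : ∑ v : Fin (k + 1), H.degree v = (k + 1) * (k - 1) + 1 := by
      simp_rw [hdeg]
      rw [Finset.sum_add_distrib, Finset.sum_const, Finset.card_univ, Fintype.card_fin,
        smul_eq_mul, Finset.sum_ite_eq' Finset.univ (0 : Fin (k+1)) (fun _ => 1)]
      simp
    have htwice := H.sum_degrees_eq_twice_card_edges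
    rw [hsum] at htwice
    have hk2' : (k + 1) * (k - 1) + 1 = k ^ 2 := by
      obtain ⟨j, rfl⟩ : ∃ j, k = j + 2 := ⟨k - 2, by omega⟩
      have h1 : j + 2 - 1 = j + 1 := by omega
      rw [h1]; ring
    rw [hk2'] at htwice
    rw [Set.ncard_eq_toFinset_card']
    have : H.edgeSet.toFinset = H.edgeFinset := rfl
    rw [this]
    generalize hg : k ^ 2 = K at *
    omega
  · -- removed edges form a matching
    intro e₁ he₁ e₂ he₂ hne v ⟨hv1, hv2⟩
    have he1 := Sym2.other_spec hv1
    have he2 := Sym2.other_spec hv2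
    obtain ⟨hc1, hn1⟩ := he₁
    obtain ⟨hc2, hn2⟩ := he₂
    rw [← he1, SimpleGraph.mem_edgeSet] at hc1 hn1
    rw [← he2, SimpleGraph.mem_edgeSet] at hc2 hn2
    have hne1 : v ≠ (Sym2.Mem.other hv1) := hc1
    have hne2 : v ≠ (Sym2.Mem.other hv2) := hc2
    rw [hAdj] at hn1 hn2
    push_neg at hn1 hn2
    have hz1 : v + (Sym2.Mem.other hv1) = 0 := hn1 hne1
    have hz2 : v + (Sym2.Mem.other hv2) = 0 := hn2 hne2
    have : (Sym2.Mem.other hv1) = (Sym2.Mem.other hv2) := add_left_cancel (hz1.trans hz2.symm)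
    exact hne (by rw [← he1, ← he2, this])
end

section
/- Let G be a graph of maximum degree Δ and π a partial Δ-edge-coloring of G maximizing the number of colored edges. Then every connected component of the graph of uncolored edges has at most ⌊Δ/2⌋ edges. -/
/-- A partial edge coloring of `G` with colors `{1,…,k}`: only edges of `G` may be
colored, colors lie in `{1,…,k}`, and incident colored edges get distinct colors. -/
def IsPartialEdgeColoring {V : Type*} (G : SimpleGraph V) (k : ℕ) (π : Sym2 V → Option ℕ) : Prop :=
  (∀ e, π e ≠ none → e ∈ G.edgeSet) ∧
  (∀ e c, π e = some c → 1 ≤ c ∧ c ≤ k) ∧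
  ∀ e₁ ∈ G.edgeSet, ∀ e₂ ∈ G.edgeSet, e₁ ≠ e₂ → (∃ v, v ∈ e₁ ∧ v ∈ e₂) →
    π e₁ = none ∨ π e₂ = none ∨ π e₁ ≠ π e₂

/-- The set of colored edges of a partial coloring. -/
def coloredEdges {V : Type*} (π : Sym2 V → Option ℕ) : Set (Sym2 V) := {e | π e ≠ none}

/-- `π` is a partial `k`-edge-coloring of `G` maximizing the number of colored edges. -/
def MaximizesColored {V : Type*} (G : SimpleGraph V) (k : ℕ) (π : Sym2 V → Option ℕ) : Prop :=
  IsPartialEdgeColoring G k π ∧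
  ∀ π', IsPartialEdgeColoring G k π' → (coloredEdges π').ncard ≤ (coloredEdges π).ncard

/-- The set of colors from `{1,…,k}` free at `v`, i.e. appearing on no edge incident to `v`. -/
def freeColors {V : Type*} (G : SimpleGraph V) (k : ℕ) (π : Sym2 V → Option ℕ) (v : V) :
    Set ℕ :=
  {c | 1 ≤ c ∧ c ≤ k ∧ ∀ e ∈ G.edgeSet, v ∈ e → π e ≠ some c}

/-- The graph of uncolored edges. -/
def freeGraph {V : Type*} (G : SimpleGraph V) (π : Sym2 V → Option ℕ) : SimpleGraph V :=
  SimpleGraph.fromRel (fun u v => G.Adj u v ∧ π s(u, v) = none)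

open Finset SimpleGraph

section Helpers
variable {V : Type*} {G : SimpleGraph V} {k Δ : ℕ} {π : Sym2 V → Option ℕ}

lemma freeGraph_adj {x y : V} :
    (freeGraph G π).Adj x y ↔ G.Adj x y ∧ π s(x, y) = none := by
  unfold freeGraph
  rw [SimpleGraph.fromRel_adj]
  constructor
  · rintro ⟨hne, (⟨h1, h2⟩ | ⟨h1, h2⟩)⟩
    · exact ⟨h1, h2⟩
    · exact ⟨h1.symm, by rwa [Sym2.eq_swap]⟩
  · rintro ⟨h1, h2⟩
    exact ⟨h1.ne, Or.inl ⟨h1, h2⟩⟩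

lemma ne_some_of_proper (hcol : IsPartialEdgeColoring G k π) {e₁ e₂ : Sym2 V}
    (h1 : e₁ ∈ G.edgeSet) (h2 : e₂ ∈ G.edgeSet) (hne : e₁ ≠ e₂) {x : V}
    (hx1 : x ∈ e₁) (hx2 : x ∈ e₂) {d : ℕ} (hd : π e₁ = some d) : π e₂ ≠ some d := by
  rcases hcol.2.2 e₁ h1 e₂ h2 hne ⟨x, hx1, hx2⟩ with h | h | h
  · simp [h] at hd
  · simp [h]
  · intro hh; exact h (hd.trans hh.symm)

open Classical in
/-- The finset of free colors. -/
noncomputable def freeFinset (G : SimpleGraph V) (k : ℕ) (π : Sym2 V → Option ℕ) (w : V) :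
    Finset ℕ :=
  (Finset.Icc 1 k).filter fun c => ∀ e ∈ G.edgeSet, w ∈ e → π e ≠ some c

lemma mem_freeFinset {w : V} {c : ℕ} :
    c ∈ freeFinset G k π w ↔ c ∈ freeColors G k π w := by
  simp [freeFinset, freeColors, and_assoc]

lemma card_le_card_freeFinset [Fintype V] (hcol : IsPartialEdgeColoring G Δ π)
    (hdeg : ∀ v : V, (G.neighborSet v).ncard ≤ Δ) (w : V) (s : Finset V)
    (hs : ∀ x ∈ s, G.Adj w x ∧ π s(w, x) = none) :
    s.card ≤ (freeFinset G Δ π w).card := by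
  classical
  set I : Finset (Sym2 V) := G.incidenceFinset w with hI
  have hIdef : ∀ e, e ∈ I ↔ e ∈ G.edgeSet ∧ w ∈ e := by
    intro e; rw [hI, mem_incidenceFinset]; exact Iff.rfl
  have hIcard : I.card ≤ Δ := by
    rw [hI, card_incidenceFinset_eq_degree, ← card_neighborFinset_eq_degree,
      neighborFinset_def, ← Set.ncard_eq_toFinset_card']
    exact hdeg w
  set C : Finset (Sym2 V) := I.filter fun e => ¬ π e = none with hC
  set Uc : Finset (Sym2 V) := I.filter fun e => π e = none with hUc
  have hCU : Uc.card + C.card = I.card := card_filter_add_card_filter_not _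
  have hsUc : s.card ≤ Uc.card := by
    apply Finset.card_le_card_of_injOn (fun x => s(w, x))
    · intro x hx
      rw [Finset.mem_coe, hUc, mem_filter, hIdef]
      exact ⟨⟨(hs x hx).1, Sym2.mem_mk_left w x⟩, (hs x hx).2⟩
    · intro a _ b _ h
      exact Sym2.congr_right.mp h
  set used : Finset ℕ := C.image fun e => (π e).getD 0 with hu
  have husedC : used.card = C.card := by
    rw [hu]
    apply Finset.card_image_of_injOn
    intro e₁ he₁ e₂ he₂ heq
    rw [Finset.mem_coe, hC, mem_filter] at he₁ he₂
    obtain ⟨d₁, hd₁⟩ := Option.ne_none_iff_exists'.mp he₁.2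
    obtain ⟨d₂, hd₂⟩ := Option.ne_none_iff_exists'.mp he₂.2
    simp only [hd₁, hd₂, Option.getD_some] at heq
    subst heq
    by_contra hne
    exact ne_some_of_proper hcol ((hIdef e₁).mp he₁.1).1 ((hIdef e₂).mp he₂.1).1 hne
      ((hIdef e₁).mp he₁.1).2 ((hIdef e₂).mp he₂.1).2 hd₁ hd₂
  have husedIcc : used ⊆ Finset.Icc 1 Δ := by
    intro c hc
    rw [hu, mem_image] at hc
    obtain ⟨e, he, hce⟩ := hc
    rw [hC, mem_filter] at he
    obtain ⟨d, hd⟩ := Option.ne_none_iff_exists'.mp he.2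
    rw [hd, Option.getD_some] at hce
    subst hce
    obtain ⟨h1, h2⟩ := hcol.2.1 e d hd
    exact Finset.mem_Icc.mpr ⟨h1, h2⟩
  have hfree : Finset.Icc 1 Δ \ used ⊆ freeFinset G Δ π w := by
    intro c hc
    rw [mem_sdiff] at hc
    rw [mem_freeFinset]
    have hcc := Finset.mem_Icc.mp hc.1
    refine ⟨hcc.1, hcc.2, fun e he hwe hpe => ?_⟩
    apply hc.2
    rw [hu, mem_image]
    refine ⟨e, ?_, by simp [hpe]⟩
    rw [hC, mem_filter, hIdef]
    exact ⟨⟨he, hwe⟩, by simp [hpe]⟩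
  have h1 : (Finset.Icc 1 Δ \ used).card ≤ (freeFinset G Δ π w).card :=
    Finset.card_le_card hfree
  have h2 : (Finset.Icc 1 Δ \ used).card = Δ - used.card := by
    rw [Finset.card_sdiff_of_subset husedIcc, Nat.card_Icc]
    omega
  omega

lemma exists_free_color [Fintype V] (hcol : IsPartialEdgeColoring G Δ π)
    (hdeg : ∀ v : V, (G.neighborSet v).ncard ≤ Δ) {w x : V}
    (hadj : G.Adj w x) (hnone : π s(w, x) = none) :
    ∃ c', c' ∈ freeColors G Δ π w := by
  have h := card_le_card_freeFinset hcol hdeg w {x} (by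
    intro y hy
    rw [Finset.mem_singleton] at hy
    subst hy
    exact ⟨hadj, hnone⟩)
  simp only [Finset.card_singleton] at h
  have hpos : 0 < (freeFinset G Δ π w).card := by omega
  obtain ⟨c', hc'⟩ := Finset.card_pos.mp hpos
  exact ⟨c', mem_freeFinset.mp hc'⟩

end Helpers

section Kempe
variable {V : Type*} {G : SimpleGraph V} {Δ : ℕ} {π : Sym2 V → Option ℕ} {c c' : ℕ} {u w : V}

/-- The subgraph of edges colored `c` or `c'`. -/
def kempe {V : Type*} (G : SimpleGraph V) (π : Sym2 V → Option ℕ) (c c' : ℕ) : SimpleGraph V :=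
  SimpleGraph.fromRel fun x y => G.Adj x y ∧ (π s(x, y) = some c ∨ π s(x, y) = some c')

lemma kempe_adj {x y : V} :
    (kempe G π c c').Adj x y ↔ G.Adj x y ∧ (π s(x, y) = some c ∨ π s(x, y) = some c') := by
  unfold kempe
  rw [SimpleGraph.fromRel_adj]
  constructor
  · rintro ⟨hne, (⟨h1, h2⟩ | ⟨h1, h2⟩)⟩
    · exact ⟨h1, h2⟩
    · exact ⟨h1.symm, by rwa [Sym2.eq_swap]⟩
  · rintro ⟨h1, h2⟩
    exact ⟨h1.ne, Or.inl ⟨h1, h2⟩⟩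

lemma kempe_mem_edgeSet {e : Sym2 V} (he : e ∈ (kempe G π c c').edgeSet) :
    e ∈ G.edgeSet ∧ (π e = some c ∨ π e = some c') := by
  induction e using Sym2.ind with
  | _ x y =>
    rw [SimpleGraph.mem_edgeSet] at he
    exact ⟨(SimpleGraph.mem_edgeSet _).mpr (kempe_adj.mp he).1, (kempe_adj.mp he).2⟩

lemma mem_kempe {e : Sym2 V} (he : e ∈ G.edgeSet) (h : π e = some c ∨ π e = some c') :
    e ∈ (kempe G π c c').edgeSet := by
  induction e using Sym2.ind with
  | _ x y =>
    exact (SimpleGraph.mem_edgeSet _).mpr (kempe_adj.mpr ⟨(SimpleGraph.mem_edgeSet _).mp he, h⟩)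

/-- The edge `e` lies in the Kempe component of `u`. -/
def inComp {V : Type*} (G : SimpleGraph V) (π : Sym2 V → Option ℕ) (c c' : ℕ) (u : V)
    (e : Sym2 V) : Prop :=
  e ∈ (kempe G π c c').edgeSet ∧ ∀ x ∈ e, (kempe G π c c').Reachable u x

open Classical in
/-- Swap colors `c` and `c'` on the Kempe component of `u`. -/
noncomputable def kswap {V : Type*} (G : SimpleGraph V) (π : Sym2 V → Option ℕ) (c c' : ℕ)
    (u : V) : Sym2 V → Option ℕ := fun e =>
  if inComp G π c c' u e then (if π e = some c then some c' else some c) else π e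

lemma inComp_of_mem {e : Sym2 V} {x : V} (he : e ∈ (kempe G π c c').edgeSet) (hx : x ∈ e)
    (hr : (kempe G π c c').Reachable u x) : inComp G π c c' u e := by
  induction e using Sym2.ind with
  | _ a b =>
    refine ⟨he, fun z hz => ?_⟩
    have hadj : (kempe G π c c').Adj a b := (SimpleGraph.mem_edgeSet _).mp he
    have hra : (kempe G π c c').Reachable u a := by
      rcases Sym2.mem_iff.mp hx with rfl | rfl
      · exact hr
      · exact hr.trans hadj.symm.reachable
    rcases Sym2.mem_iff.mp hz with rfl | rfl
    · exact hra
    · exact hra.trans hadj.reachable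

lemma kswap_eq_of_not {e : Sym2 V} (h : ¬ inComp G π c c' u e) :
    kswap G π c c' u e = π e := by
  simp only [kswap, if_neg h]

lemma kswap_eq_of_inComp {e : Sym2 V} (h : inComp G π c c' u e) :
    kswap G π c c' u e = if π e = some c then some c' else some c := by
  simp only [kswap, if_pos h]

lemma kswap_none_iff (e : Sym2 V) : kswap G π c c' u e = none ↔ π e = none := by
  by_cases h : inComp G π c c' u e
  · rw [kswap_eq_of_inComp h]
    have h2 := (kempe_mem_edgeSet h.1).2
    constructor
    · intro hh
      split_ifs at hh <;> simp at hh
    · intro hh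
      rcases h2 with h2 | h2 <;> rw [hh] at h2 <;> exact absurd h2 (by simp)
  · rw [kswap_eq_of_not h]

lemma kswap_isPartial (hcol : IsPartialEdgeColoring G Δ π) (hc1 : 1 ≤ c) (hc2 : c ≤ Δ)
    (hc'1 : 1 ≤ c') (hc'2 : c' ≤ Δ) (hcc : c ≠ c') :
    IsPartialEdgeColoring G Δ (kswap G π c c' u) := by
  refine ⟨fun e he => ?_, fun e dd hdd => ?_, fun e₁ he₁ e₂ he₂ hne hsh => ?_⟩
  · by_cases h : inComp G π c c' u e
    · exact (kempe_mem_edgeSet h.1).1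
    · rw [kswap_eq_of_not h] at he
      exact hcol.1 e he
  · by_cases h : inComp G π c c' u e
    · rw [kswap_eq_of_inComp h] at hdd
      split_ifs at hdd
      · obtain rfl : c' = dd := Option.some.inj hdd
        exact ⟨hc'1, hc'2⟩
      · obtain rfl : c = dd := Option.some.inj hdd
        exact ⟨hc1, hc2⟩
    · rw [kswap_eq_of_not h] at hdd
      exact hcol.2.1 e dd hdd
  · rcases hcol.2.2 e₁ he₁ e₂ he₂ hne hsh with h | h | h
    · left; rwa [kswap_none_iff]
    · right; left; rwa [kswap_none_iff]
    · by_cases hn1 : π e₁ = none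
      · left; rwa [kswap_none_iff]
      by_cases hn2 : π e₂ = none
      · right; left; rwa [kswap_none_iff]
      right; right
      obtain ⟨z, hz1, hz2⟩ := hsh
      by_cases s1 : inComp G π c c' u e₁ <;> by_cases s2 : inComp G π c c' u e₂
      · rw [kswap_eq_of_inComp s1, kswap_eq_of_inComp s2]
        rcases (kempe_mem_edgeSet s1.1).2 with k1 | k1 <;>
          rcases (kempe_mem_edgeSet s2.1).2 with k2 | k2
        · exact absurd (k1.trans k2.symm) h
        · simp only [k1, k2]
          simp [hcc, hcc.symm]
        · simp only [k1, k2]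
          simp [hcc, hcc.symm]
        · exact absurd (k1.trans k2.symm) h
      · rw [kswap_eq_of_inComp s1, kswap_eq_of_not s2]
        have hne2 : π e₂ ≠ some c ∧ π e₂ ≠ some c' := by
          constructor <;> intro hk <;>
            exact s2 (inComp_of_mem (mem_kempe he₂ (by simp [hk])) hz2 (s1.2 z hz1))
        split_ifs with hk
        · intro heq; exact hne2.2 heq.symm
        · intro heq; exact hne2.1 heq.symm
      · rw [kswap_eq_of_not s1, kswap_eq_of_inComp s2]
        have hne1 : π e₁ ≠ some c ∧ π e₁ ≠ some c' := by
          constructor <;> intro hk <;>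
            exact s1 (inComp_of_mem (mem_kempe he₁ (by simp [hk])) hz1 (s2.2 z hz2))
        split_ifs with hk
        · intro heq; exact hne1.2 heq
        · intro heq; exact hne1.1 heq
      · rw [kswap_eq_of_not s1, kswap_eq_of_not s2]
        exact h

lemma kswap_max [Fintype V] (hmax : MaximizesColored G Δ π) (hc1 : 1 ≤ c) (hc2 : c ≤ Δ)
    (hc'1 : 1 ≤ c') (hc'2 : c' ≤ Δ) (hcc : c ≠ c') :
    MaximizesColored G Δ (kswap G π c c' u) := by
  refine ⟨kswap_isPartial hmax.1 hc1 hc2 hc'1 hc'2 hcc, fun π'' h'' => ?_⟩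
  have hcolored : coloredEdges (kswap G π c c' u) = coloredEdges π := by
    ext e
    simp only [coloredEdges, Set.mem_setOf_eq, ne_eq, kswap_none_iff]
  rw [hcolored]
  exact hmax.2 π'' h''

lemma kswap_freeGraph : freeGraph G (kswap G π c c' u) = freeGraph G π := by
  ext x y
  rw [freeGraph_adj, freeGraph_adj, kswap_none_iff]

lemma kswap_free_far (hw : ¬ (kempe G π c c').Reachable u w) {d : ℕ}
    (hd : d ∈ freeColors G Δ π w) : d ∈ freeColors G Δ (kswap G π c c' u) w := by
  obtain ⟨h1, h2, hf⟩ := hd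
  refine ⟨h1, h2, fun e he hwe => ?_⟩
  have hn : ¬ inComp G π c c' u e := fun h => hw (h.2 w hwe)
  rw [kswap_eq_of_not hn]
  exact hf e he hwe

lemma kswap_free_reach_c' (hcc : c ≠ c') (hw : (kempe G π c c').Reachable u w)
    (hfree : c ∈ freeColors G Δ π w) (h1 : 1 ≤ c') (h2 : c' ≤ Δ) :
    c' ∈ freeColors G Δ (kswap G π c c' u) w := by
  obtain ⟨_, _, hf⟩ := hfree
  refine ⟨h1, h2, fun e he hwe => ?_⟩
  by_cases h : inComp G π c c' u e
  · rw [kswap_eq_of_inComp h]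
    split_ifs with hec
    · exact absurd hec (hf e he hwe)
    · intro heq; exact hcc (Option.some.inj heq)
  · rw [kswap_eq_of_not h]
    intro heq
    exact h (inComp_of_mem (mem_kempe he (Or.inr heq)) hwe hw)

lemma kswap_free_reach_c (hcc : c ≠ c') (hw : (kempe G π c c').Reachable u w)
    (hfree : c' ∈ freeColors G Δ π w) (h1 : 1 ≤ c) (h2 : c ≤ Δ) :
    c ∈ freeColors G Δ (kswap G π c c' u) w := by
  obtain ⟨_, _, hf⟩ := hfree
  refine ⟨h1, h2, fun e he hwe => ?_⟩
  by_cases h : inComp G π c c' u e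
  · rcases (kempe_mem_edgeSet h.1).2 with hk | hk
    · rw [kswap_eq_of_inComp h, if_pos hk]
      intro heq; exact hcc (Option.some.inj heq).symm
    · exact absurd hk (hf e he hwe)
  · rw [kswap_eq_of_not h]
    intro heq
    exact h (inComp_of_mem (mem_kempe he (Or.inl heq)) hwe hw)

lemma not_shared_free [Fintype V] (hmax : MaximizesColored G Δ π) {x y : V} (hadj : G.Adj x y)
    (hnone : π s(x, y) = none) {d : ℕ} (hdx : d ∈ freeColors G Δ π x)
    (hdy : d ∈ freeColors G Δ π y) : False := by
  classical
  obtain ⟨hd1, hd2, hfx⟩ := hdx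
  obtain ⟨_, _, hfy⟩ := hdy
  set π'' : Sym2 V → Option ℕ := fun e => if e = s(x, y) then some d else π e with hπ''
  have hcol := hmax.1
  have hval : ∀ e, e ≠ s(x, y) → π'' e = π e := by
    intro e h; rw [hπ'']; simp only [if_neg h]
  have hvaly : π'' s(x, y) = some d := by rw [hπ'']; simp
  have hcol'' : IsPartialEdgeColoring G Δ π'' := by
    refine ⟨fun e he => ?_, fun e dd hdd => ?_, fun e₁ he₁ e₂ he₂ hne hsh => ?_⟩
    · by_cases h : e = s(x, y)
      · subst h; exact (SimpleGraph.mem_edgeSet _).mpr hadj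
      · rw [hval e h] at he; exact hcol.1 e he
    · by_cases h : e = s(x, y)
      · subst h; rw [hvaly] at hdd
        obtain rfl : d = dd := Option.some.inj hdd
        exact ⟨hd1, hd2⟩
      · rw [hval e h] at hdd; exact hcol.2.1 e dd hdd
    · obtain ⟨z, hz1, hz2⟩ := hsh
      by_cases h1 : e₁ = s(x, y) <;> by_cases h2 : e₂ = s(x, y)
      · exact absurd (h1.trans h2.symm) hne
      · right; right
        rw [hval e₂ h2]
        subst h1
        rw [hvaly]
        intro heq
        rcases Sym2.mem_iff.mp hz1 with rfl | rfl
        · exact hfx e₂ he₂ hz2 heq.symm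
        · exact hfy e₂ he₂ hz2 heq.symm
      · right; right
        rw [hval e₁ h1]
        subst h2
        rw [hvaly]
        intro heq
        rcases Sym2.mem_iff.mp hz2 with rfl | rfl
        · exact hfx e₁ he₁ hz1 heq
        · exact hfy e₁ he₁ hz1 heq
      · rcases hcol.2.2 e₁ he₁ e₂ he₂ hne ⟨z, hz1, hz2⟩ with h | h | h
        · left; rw [hval e₁ h1]; exact h
        · right; left; rw [hval e₂ h2]; exact h
        · right; right; rw [hval e₁ h1, hval e₂ h2]; exact h
  have hins : coloredEdges π'' = insert s(x, y) (coloredEdges π) := by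
    ext e
    simp only [coloredEdges, Set.mem_setOf_eq, Set.mem_insert_iff]
    by_cases h : e = s(x, y)
    · subst h; simp [hvaly]
    · rw [hval e h]; simp [h]
  have hnotmem : s(x, y) ∉ coloredEdges π := by simp [coloredEdges, hnone]
  have hfin : (coloredEdges π).Finite := Set.toFinite _
  have hle := hmax.2 π'' hcol''
  rw [hins, Set.ncard_insert_of_notMem hnotmem hfin] at hle
  omega

end Kempe

section Struct
variable {V : Type*} [Fintype V] {G : SimpleGraph V} {Δ : ℕ} {π : Sym2 V → Option ℕ} {c c' : ℕ}

lemma struct (hcol : IsPartialEdgeColoring G Δ π) (hcc : c ≠ c') {u v w : V}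
    (huv : u ≠ v) (huw : u ≠ w) (hvw : v ≠ w)
    (hrv : (kempe G π c c').Reachable u v) (hrw : (kempe G π c c').Reachable u w)
    (hu : ∀ e ∈ G.edgeSet, u ∈ e → π e ≠ some c)
    (hv : ∀ e ∈ G.edgeSet, v ∈ e → π e ≠ some c')
    (hw : ∀ e ∈ G.edgeSet, w ∈ e → π e ≠ some c) : False := by
  classical
  set K := kempe G π c c' with hK
  set C : SimpleGraph V :=
    { Adj := fun x y => K.Adj x y ∧ K.Reachable u x ∧ K.Reachable u y
      symm := ⟨fun x y h => ⟨h.1.symm, h.2.2, h.2.1⟩⟩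
      loopless := ⟨fun x h => K.loopless.irrefl x h.1⟩ } with hC
  have hCadj : ∀ x y, C.Adj x y ↔ K.Adj x y ∧ K.Reachable u x ∧ K.Reachable u y := by
    intro x y; rw [hC]
  have hinj : ∀ x : V, Set.InjOn (fun y => π s(x, y)) ↑(C.neighborFinset x) := by
    intro x y1 hy1 y2 hy2 heq
    rw [Finset.mem_coe, SimpleGraph.mem_neighborFinset, hCadj] at hy1 hy2
    by_contra hne
    have k1 := kempe_adj.mp hy1.1
    have k2 := kempe_adj.mp hy2.1
    have hEne : s(x, y1) ≠ s(x, y2) := fun hE => hne (Sym2.congr_right.mp hE)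
    have heq' : π s(x, y1) = π s(x, y2) := heq
    rcases k1.2 with hk | hk <;>
      exact ne_some_of_proper hcol ((SimpleGraph.mem_edgeSet _).mpr k1.1)
        ((SimpleGraph.mem_edgeSet _).mpr k2.1) hEne (Sym2.mem_mk_left x y1)
        (Sym2.mem_mk_left x y2) hk (by rw [← heq']; exact hk)
  have deg2 : ∀ x : V, C.degree x ≤ 2 := by
    intro x
    rw [← SimpleGraph.card_neighborFinset_eq_degree]
    have hc2 : (C.neighborFinset x).card ≤ ({some c, some c'} : Finset (Option ℕ)).card := by
      apply Finset.card_le_card_of_injOn (fun y => π s(x, y)) ?_ (hinj x)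
      intro y hy
      rw [Finset.mem_coe, SimpleGraph.mem_neighborFinset, hCadj] at hy
      have hk := (kempe_adj.mp hy.1).2
      simp only [Finset.mem_coe, Finset.mem_insert, Finset.mem_singleton]
      exact hk
    calc (C.neighborFinset x).card ≤ ({some c, some c'} : Finset (Option ℕ)).card := hc2
      _ ≤ 2 := (Finset.card_insert_le _ _).trans (by simp)
  have deg1 : ∀ (x : V) (d1 d2 : ℕ),
      (∀ y, (kempe G π c c').Adj x y → π s(x, y) = some d1 ∨ π s(x, y) = some d2) →
      (∀ e ∈ G.edgeSet, x ∈ e → π e ≠ some d1) → C.degree x ≤ 1 := by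
    intro x d1 d2 hcases hmiss
    rw [← SimpleGraph.card_neighborFinset_eq_degree]
    have hc1 : (C.neighborFinset x).card ≤ ({some d2} : Finset (Option ℕ)).card := by
      apply Finset.card_le_card_of_injOn (fun y => π s(x, y)) ?_ (hinj x)
      intro y hy
      rw [Finset.mem_coe, SimpleGraph.mem_neighborFinset, hCadj] at hy
      rcases hcases y hy.1 with hk | hk
      · exact absurd hk (hmiss s(x, y)
          ((SimpleGraph.mem_edgeSet _).mpr (kempe_adj.mp hy.1).1) (Sym2.mem_mk_left x y))
      · simp [hk]
    simpa using hc1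
  have key : ∀ x : V, K.Reachable u x → x ≠ u →
      ∃ y : V, K.Adj x y ∧ K.dist u y < K.dist u x := by
    intro x hx hxu
    obtain ⟨p, hp⟩ := hx.exists_walk_length_eq_dist
    have hpos : 0 < K.dist u x := hx.pos_dist_of_ne (Ne.symm hxu)
    cases hrev : p.reverse with
    | nil => exact absurd rfl hxu
    | cons h q =>
      refine ⟨_, h, ?_⟩
      have hlenrev := SimpleGraph.Walk.length_reverse p
      rw [hrev] at hlenrev
      simp only [SimpleGraph.Walk.length_cons] at hlenrev
      have hdy := SimpleGraph.dist_le q.reverse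
      rw [SimpleGraph.Walk.length_reverse] at hdy
      omega
  choose! f hf1 hf2 using key
  set S : Finset V := Finset.univ.filter (fun x => K.Reachable u x) with hS
  have hmemS : ∀ x, x ∈ S ↔ K.Reachable u x := by
    intro x; rw [hS, Finset.mem_filter]; simp
  have huS : u ∈ S := (hmemS u).mpr (SimpleGraph.Reachable.refl u)
  have hinj2 : (S.erase u).card ≤ C.edgeFinset.card := by
    apply Finset.card_le_card_of_injOn (fun x => s(x, f x))
    · intro x hx
      rw [Finset.mem_coe, Finset.mem_erase] at hx
      have hrx := (hmemS x).mp hx.2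
      have hadj := hf1 x hrx hx.1
      rw [Finset.mem_coe, SimpleGraph.mem_edgeFinset]
      exact (SimpleGraph.mem_edgeSet _).mpr
        ((hCadj x (f x)).mpr ⟨hadj, hrx, hrx.trans hadj.reachable⟩)
    · intro x hx y hy heq
      rw [Finset.mem_coe, Finset.mem_erase] at hx hy
      by_contra hne
      rcases Sym2.eq_iff.mp heq with ⟨rfl, _⟩ | ⟨h1, h2⟩
      · exact hne rfl
      · have d1 := hf2 x ((hmemS x).mp hx.2) hx.1
        have d2 := hf2 y ((hmemS y).mp hy.2) hy.1
        rw [h2] at d1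
        rw [← h1] at d2
        omega
  have hhs : ∑ x : V, C.degree x = 2 * C.edgeFinset.card :=
    SimpleGraph.sum_degrees_eq_twice_card_edges C
  have hzero : ∀ x ∈ Finset.univ, x ∉ S → C.degree x = 0 := by
    intro x _ hx
    rw [← SimpleGraph.card_neighborFinset_eq_degree, Finset.card_eq_zero]
    ext y
    simp only [SimpleGraph.mem_neighborFinset, Finset.notMem_empty, iff_false]
    intro hadj
    exact hx ((hmemS x).mpr ((hCadj x y).mp hadj).2.1)
  have hsum1 : ∑ x ∈ S, C.degree x = ∑ x : V, C.degree x :=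
    Finset.sum_subset (Finset.subset_univ S) hzero
  set T : Finset V := {u, v, w} with hT
  have hTS : T ⊆ S := by
    intro x hx
    rw [hT] at hx
    simp only [Finset.mem_insert, Finset.mem_singleton] at hx
    rcases hx with rfl | rfl | rfl
    · exact huS
    · exact (hmemS x).mpr hrv
    · exact (hmemS x).mpr hrw
  have hTcard : T.card = 3 := by
    rw [hT, Finset.card_insert_of_notMem (by simp [huv, huw]),
      Finset.card_insert_of_notMem (by simp [hvw]), Finset.card_singleton]
  have hsum2 : ∑ x ∈ S \ T, C.degree x + ∑ x ∈ T, C.degree x = ∑ x ∈ S, C.degree x :=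
    Finset.sum_sdiff hTS
  have hb1 : ∑ x ∈ S \ T, C.degree x ≤ 2 * (S.card - 3) := by
    calc ∑ x ∈ S \ T, C.degree x ≤ ∑ _x ∈ S \ T, 2 := Finset.sum_le_sum (fun x _ => deg2 x)
      _ = 2 * (S \ T).card := by rw [Finset.sum_const, smul_eq_mul, mul_comm]
      _ = 2 * (S.card - 3) := by rw [Finset.card_sdiff_of_subset hTS, hTcard]
  have hb2 : ∑ x ∈ T, C.degree x ≤ 3 := by
    have hu1 : C.degree u ≤ 1 := deg1 u c c' (fun y hA => (kempe_adj.mp hA).2) hu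
    have hv1 : C.degree v ≤ 1 := deg1 v c' c (fun y hA => ((kempe_adj.mp hA).2).symm) hv
    have hw1 : C.degree w ≤ 1 := deg1 w c c' (fun y hA => (kempe_adj.mp hA).2) hw
    rw [hT, Finset.sum_insert (by simp [huv, huw]), Finset.sum_insert (by simp [hvw]),
      Finset.sum_singleton]
    omega
  have hScard : 3 ≤ S.card := hTcard ▸ Finset.card_le_card hTS
  have herase : (S.erase u).card = S.card - 1 := Finset.card_erase_of_mem huS
  omega

end Struct

section Main
variable {V : Type*} [Fintype V] {G : SimpleGraph V} {Δ : ℕ}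

lemma key_disjoint (hdeg : ∀ v : V, (G.neighborSet v).ncard ≤ Δ) :
    ∀ (n : ℕ) (π : Sym2 V → Option ℕ), MaximizesColored G Δ π → ∀ u w : V, u ≠ w →
      ∀ p : (freeGraph G π).Walk u w, p.length ≤ n →
      ∀ d : ℕ, d ∈ freeColors G Δ π u → d ∈ freeColors G Δ π w → False := by
  intro n
  induction n with
  | zero =>
    intro π hmax u w hne p hp d hdu hdw
    cases p with
    | nil => exact hne rfl
    | cons h q => simp at hp
  | succ n ih =>
    intro π hmax u w hne p hp d hdu hdw
    cases p with
    | nil => exact hne rfl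
    | cons h q =>
      rename_i v1
      have hlen : q.length ≤ n := by
        simp only [SimpleGraph.Walk.length_cons] at hp
        omega
      have hadj := freeGraph_adj.mp h
      by_cases hvw : v1 = w
      · subst hvw
        exact not_shared_free hmax hadj.1 hadj.2 hdu hdw
      · obtain ⟨c', hc'⟩ := exists_free_color hmax.1 hdeg hadj.1.symm
          (by rw [Sym2.eq_swap]; exact hadj.2)
      -- c' is free at v1
        by_cases hdc : d = c'
        · subst hdc
          exact ih π hmax v1 w hvw q hlen d hc' hdw
        · obtain ⟨hd1, hd2, hfu⟩ := id hdu
          obtain ⟨hc'1, hc'2, hfv⟩ := id hc'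
          obtain ⟨_, _, hfw⟩ := id hdw
          by_cases hr1 : (kempe G π d c').Reachable u v1
          · by_cases hrw : (kempe G π d c').Reachable u w
            · exact struct hmax.1 hdc hadj.1.ne hne hvw hr1 hrw hfu hfv hfw
            · have hmax' := kswap_max (u := u) hmax hd1 hd2 hc'1 hc'2 hdc
              have h1 : d ∈ freeColors G Δ (kswap G π d c' u) v1 :=
                kswap_free_reach_c hdc hr1 hc' hd1 hd2
              have h2 : d ∈ freeColors G Δ (kswap G π d c' u) w :=
                kswap_free_far hrw hdw
              have hq' : ∀ e ∈ q.edges, e ∈ (freeGraph G (kswap G π d c' u)).edgeSet := by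
                intro e he
                rw [kswap_freeGraph]
                exact q.edges_subset_edgeSet he
              exact ih (kswap G π d c' u) hmax' v1 w hvw (q.transfer _ hq')
                (by rw [SimpleGraph.Walk.length_transfer]; exact hlen) d h1 h2
          · have hmax' := kswap_max (u := u) hmax hd1 hd2 hc'1 hc'2 hdc
            have h1 : c' ∈ freeColors G Δ (kswap G π d c' u) u :=
              kswap_free_reach_c' hdc (SimpleGraph.Reachable.refl u) hdu hc'1 hc'2
            have h2 : c' ∈ freeColors G Δ (kswap G π d c' u) v1 :=
              kswap_free_far hr1 hc'
            have hnone' : kswap G π d c' u s(u, v1) = none := by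
              rw [kswap_none_iff]; exact hadj.2
            exact not_shared_free hmax' hadj.1 hnone' h1 h2

end Main


/-- In a partial `Δ`-edge-coloring maximizing the number of colored edges of a graph of maximum
degree `Δ`, every connected component of the graph of uncolored edges has at most `⌊Δ/2⌋`
edges. -/
theorem stmt6 {V : Type*} [Fintype V] (G : SimpleGraph V) (Δ : ℕ)
    (hdeg : ∀ v : V, (G.neighborSet v).ncard ≤ Δ)
    (π : Sym2 V → Option ℕ) (hmax : MaximizesColored G Δ π) (v : V) :
    {e ∈ (freeGraph G π).edgeSet | ∀ w ∈ e, (freeGraph G π).Reachable v w}.ncard ≤ Δ / 2 := by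
  classical
  set fG := freeGraph G π with hfG
  set H : SimpleGraph V :=
    { Adj := fun x y => fG.Adj x y ∧ fG.Reachable v x ∧ fG.Reachable v y
      symm := ⟨fun x y hxy => ⟨hxy.1.symm, hxy.2.2, hxy.2.1⟩⟩
      loopless := ⟨fun x hx => fG.loopless.irrefl x hx.1⟩ } with hH
  have hHadj : ∀ x y, H.Adj x y ↔ fG.Adj x y ∧ fG.Reachable v x ∧ fG.Reachable v y := by
    intro x y; rw [hH]
  have hsetEq : {e ∈ fG.edgeSet | ∀ w ∈ e, fG.Reachable v w} = H.edgeSet := by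
    ext e
    induction e using Sym2.ind with
    | _ x y =>
      simp only [Set.mem_sep_iff, SimpleGraph.mem_edgeSet, hHadj]
      constructor
      · rintro ⟨h1, h2⟩
        exact ⟨h1, h2 x (Sym2.mem_mk_left x y), h2 y (Sym2.mem_mk_right x y)⟩
      · rintro ⟨h1, h2, h3⟩
        refine ⟨h1, fun z hz => ?_⟩
        rcases Sym2.mem_iff.mp hz with rfl | rfl
        · exact h2
        · exact h3
  rw [hsetEq, ← SimpleGraph.coe_edgeFinset, Set.ncard_coe_finset]
  rw [Nat.le_div_iff_mul_le (by norm_num : 0 < 2)]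
  have hhs := SimpleGraph.sum_degrees_eq_twice_card_edges H
  set W : Finset V := Finset.univ.filter (fun x => 0 < H.degree x) with hW
  have hsum1 : ∑ x ∈ W, H.degree x = ∑ x : V, H.degree x := by
    apply Finset.sum_subset (Finset.subset_univ W)
    intro x _ hx
    rw [hW, Finset.mem_filter] at hx
    simp only [Finset.mem_univ, true_and] at hx
    omega
  have hreach : ∀ x ∈ W, fG.Reachable v x := by
    intro x hx
    rw [hW, Finset.mem_filter] at hx
    have hpos : 0 < (H.neighborFinset x).card := by
      rw [SimpleGraph.card_neighborFinset_eq_degree]; exact hx.2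
    obtain ⟨y, hy⟩ := Finset.card_pos.mp hpos
    rw [SimpleGraph.mem_neighborFinset, hHadj] at hy
    exact hy.2.1
  have hdegle : ∀ x ∈ W, H.degree x ≤ (freeFinset G Δ π x).card := by
    intro x _
    rw [← SimpleGraph.card_neighborFinset_eq_degree]
    apply card_le_card_freeFinset hmax.1 hdeg x (H.neighborFinset x)
    intro y hy
    rw [SimpleGraph.mem_neighborFinset, hHadj] at hy
    exact freeGraph_adj.mp hy.1
  have hdisj : ∀ x ∈ W, ∀ y ∈ W, x ≠ y →
      Disjoint (freeFinset G Δ π x) (freeFinset G Δ π y) := by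
    intro x hx y hy hxy
    rw [Finset.disjoint_left]
    intro a hax hay
    have hr : fG.Reachable x y := (hreach x hx).symm.trans (hreach y hy)
    obtain ⟨p⟩ := hr
    exact (key_disjoint hdeg p.length π hmax x y hxy p le_rfl a
      (mem_freeFinset.mp hax) (mem_freeFinset.mp hay)).elim
  have hbU : ∑ x ∈ W, (freeFinset G Δ π x).card = (W.biUnion (freeFinset G Δ π)).card :=
    (Finset.card_biUnion hdisj).symm
  have hsub : W.biUnion (freeFinset G Δ π) ⊆ Finset.Icc 1 Δ := by
    intro a ha
    rw [Finset.mem_biUnion] at ha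
    obtain ⟨x, _, hax⟩ := ha
    have h := mem_freeFinset.mp hax
    exact Finset.mem_Icc.mpr ⟨h.1, h.2.1⟩
  have h1 : ∑ x ∈ W, H.degree x ≤ ∑ x ∈ W, (freeFinset G Δ π x).card :=
    Finset.sum_le_sum hdegle
  have h2 : (W.biUnion (freeFinset G Δ π)).card ≤ (Finset.Icc 1 Δ).card :=
    Finset.card_le_card hsub
  rw [Nat.card_Icc] at h2
  omega
end

section
/- Let G be a graph of maximum degree k, F a maximum k-matching of G, and OPT a maximum k-edge-colorable subgraph of G. Let Γ̄ be a set of connected components Q of F such that no edge of OPT joins V(Q) to its complement, and suppose every induced subgraph of OPT on V(Q) has at most c_k(Q) edges. Then |E(OPT)| ≤ |E(F)| − Σ_{Q∈Γ̄} (|E(Q)| − c_k(Q)). -/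
/-- `ck k G` is the maximum number of edges of a `k`-edge-colorable subgraph of `G`. -/
noncomputable def ck {V : Type*} (k : ℕ) (G : SimpleGraph V) : ℕ :=
  sSup {n | ∃ H : SimpleGraph V, H ≤ G ∧ (∃ c, IsProperEdgeColoring H k c) ∧
    H.edgeSet.ncard = n}

open Set

lemma aux_ncard_biUnion {ι α : Type*} (t : Finset ι) (f : ι → Set α)
    (hfin : ∀ i, (f i).Finite)
    (hdisj : ∀ i ∈ t, ∀ j ∈ t, i ≠ j → Disjoint (f i) (f j)) :
    (⋃ i ∈ t, f i).ncard = ∑ i ∈ t, (f i).ncard := by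
  classical
  induction t using Finset.induction_on with
  | empty => simp
  | insert a s hx ih =>
    rw [Finset.sum_insert hx]
    have hU : (⋃ i ∈ insert a s, f i) = f a ∪ ⋃ i ∈ s, f i := by
      simp [Set.biUnion_insert]
    have hfin2 : (⋃ i ∈ s, f i).Finite := by
      rw [← Finset.set_biUnion_coe]
      exact Set.Finite.biUnion s.finite_toSet (fun i _ => hfin i)
    have hdis : Disjoint (f a) (⋃ i ∈ s, f i) := by
      refine Set.disjoint_iUnion₂_right.mpr (fun i hi => ?_)
      exact hdisj a (Finset.mem_insert_self a s) i (Finset.mem_insert_of_mem hi)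
        (by rintro rfl; exact hx hi)
    rw [hU, Set.ncard_union_eq hdis (hfin a) hfin2,
      ih (fun i hi => fun j hj hij => hdisj i (Finset.mem_insert_of_mem hi) j
        (Finset.mem_insert_of_mem hj) hij)]

lemma aux_induce_edge_ncard {V : Type*} (s : Set V) (F : SimpleGraph V) :
    (SimpleGraph.induce s F).edgeSet.ncard = {e ∈ F.edgeSet | ∀ w ∈ e, w ∈ s}.ncard := by
  have himg : Sym2.map (Subtype.val : s → V) '' (SimpleGraph.induce s F).edgeSet
      = {e ∈ F.edgeSet | ∀ w ∈ e, w ∈ s} := by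
    ext e
    constructor
    · rintro ⟨e', he', rfl⟩
      induction e' using Sym2.ind with
      | _ u v =>
        refine ⟨he', ?_⟩
        intro w hw
        rw [Sym2.map_pair_eq, Sym2.mem_iff] at hw
        rcases hw with rfl | rfl
        · exact u.2
        · exact v.2
    · intro he
      induction e using Sym2.ind with
      | _ u v =>
        obtain ⟨hadj, hmem⟩ := he
        refine ⟨s(⟨u, hmem u (Sym2.mem_mk_left u v)⟩, ⟨v, hmem v (Sym2.mem_mk_right u v)⟩), ?_, ?_⟩
        · exact hadj
        · rfl
  rw [← himg, Set.ncard_image_of_injective _ (Sym2.map.injective Subtype.val_injective)]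

lemma aux_ck_le {W : Type*} [Finite W] (k : ℕ) (H : SimpleGraph W) :
    ck k H ≤ H.edgeSet.ncard := by
  apply csSup_le
  · exact ⟨0, ⊥, bot_le, ⟨fun _ => 0, fun e he => by simp at he,
      fun e₁ he₁ => by simp at he₁⟩, by simp⟩
  · rintro n ⟨H', hle, _, rfl⟩
    exact Set.ncard_le_ncard (SimpleGraph.edgeSet_mono hle) (Set.toFinite _)

lemma aux_deg_le {V : Type*} {H : SimpleGraph V} {k : ℕ} {c : Sym2 V → ℕ}
    (h : IsProperEdgeColoring H k c) (v : V) : (H.neighborSet v).ncard ≤ k := by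
  classical
  have hinj : Set.InjOn (fun w => c s(v, w)) (H.neighborSet v) := by
    intro w₁ hw₁ w₂ hw₂ hc
    by_contra hne
    have hne' : s(v, w₁) ≠ s(v, w₂) := fun h => hne (Sym2.congr_right.mp h)
    exact h.2 s(v, w₁) hw₁ s(v, w₂) hw₂ hne' ⟨v, by simp, by simp⟩ hc
  have := Set.ncard_image_of_injOn hinj
  rw [← this]
  have hsub : (fun w => c s(v, w)) '' (H.neighborSet v) ⊆ ↑(Finset.range k) := by
    rintro n ⟨w, hw, rfl⟩
    simpa using h.1 s(v, w) hw
  calc ((fun w => c s(v, w)) '' (H.neighborSet v)).ncard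
      ≤ (↑(Finset.range k) : Set ℕ).ncard := Set.ncard_le_ncard hsub (Finset.range k).finite_toSet
    _ = k := by rw [Set.ncard_coe_finset]; simp

/-- Key inequality: if `F` is a maximum `k`-matching and `OPT` a maximum `k`-edge-colorable
subgraph, and `Γ` is a set of components of `F` not joined by any `OPT`-edge to their
complement on which induced subgraphs of `OPT` have at most `c_k(Q)` edges, then
`|E(OPT)| ≤ |E(F)| − Σ_{Q∈Γ} (|E(Q)| − c_k(Q))`. -/
theorem stmt16 {V : Type*} [Fintype V] (k : ℕ) (G F OPT : SimpleGraph V)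
    (hFle : F ≤ G) (hFdeg : ∀ v : V, (F.neighborSet v).ncard ≤ k)
    (hFmax : ∀ K : SimpleGraph V, K ≤ G → (∀ v : V, (K.neighborSet v).ncard ≤ k) →
      K.edgeSet.ncard ≤ F.edgeSet.ncard)
    (hOle : OPT ≤ G) (hOcol : ∃ c, IsProperEdgeColoring OPT k c)
    (hOmax : ∀ K : SimpleGraph V, K ≤ G → (∃ c, IsProperEdgeColoring K k c) →
      K.edgeSet.ncard ≤ OPT.edgeSet.ncard)
    (Γ : Finset F.ConnectedComponent)
    (hsep : ∀ Q ∈ Γ, ∀ u v : V, OPT.Adj u v → (u ∈ Q.supp ↔ v ∈ Q.supp))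
    (hind : ∀ Q ∈ Γ, {e ∈ OPT.edgeSet | ∀ w ∈ e, w ∈ Q.supp}.ncard ≤
      ck k (SimpleGraph.induce Q.supp F)) :
    OPT.edgeSet.ncard ≤ F.edgeSet.ncard -
      ∑ Q ∈ Γ, ((SimpleGraph.induce Q.supp F).edgeSet.ncard -
        ck k (SimpleGraph.induce Q.supp F)) := by
  classical
  obtain ⟨c, hc⟩ := hOcol
  set S : Set V := ⋃ Q ∈ Γ, Q.supp with hS
  have hmemS : ∀ v : V, v ∈ S ↔ ∃ Q ∈ Γ, v ∈ Q.supp := by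
    intro v; simp [hS]
  -- F-adjacency preserves membership in a component's support
  have hFsupp : ∀ (Q : F.ConnectedComponent) (u v : V), F.Adj u v → u ∈ Q.supp → v ∈ Q.supp := by
    intro Q u v hadj hu
    rw [SimpleGraph.ConnectedComponent.mem_supp_iff] at hu ⊢
    rw [← hu]
    exact SimpleGraph.ConnectedComponent.sound (SimpleGraph.Adj.reachable hadj.symm)
  -- the hybrid graph K
  let K : SimpleGraph V :=
    { Adj := fun u v => (u ∉ S ∧ v ∉ S ∧ OPT.Adj u v) ∨ (u ∈ S ∧ v ∈ S ∧ F.Adj u v)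
      symm := by
        constructor
        rintro u v (⟨h1, h2, h3⟩ | ⟨h1, h2, h3⟩)
        · exact Or.inl ⟨h2, h1, h3.symm⟩
        · exact Or.inr ⟨h2, h1, h3.symm⟩
      loopless := by
        constructor
        rintro v (⟨_, _, h⟩ | ⟨_, _, h⟩) <;> exact h.ne rfl }
  have hKle : K ≤ G := by
    rintro u v (⟨_, _, h⟩ | ⟨_, _, h⟩)
    · exact hOle h
    · exact hFle h
  have hKdeg : ∀ v : V, (K.neighborSet v).ncard ≤ k := by
    intro v
    by_cases hv : v ∈ S
    · refine le_trans (Set.ncard_le_ncard ?_ (Set.toFinite _)) (hFdeg v)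
      rintro w (⟨h1, _, _⟩ | ⟨_, _, h3⟩)
      · exact absurd hv h1
      · exact h3
    · refine le_trans (Set.ncard_le_ncard ?_ (Set.toFinite _)) (aux_deg_le hc v)
      rintro w (⟨_, _, h3⟩ | ⟨h1, _, _⟩)
      · exact h3
      · exact absurd h1 hv
  have hKcard : K.edgeSet.ncard ≤ F.edgeSet.ncard := hFmax K hKle hKdeg
  -- edge set pieces
  set Oout : Set (Sym2 V) := {e ∈ OPT.edgeSet | ∀ w ∈ e, w ∉ S} with hOout
  set OQ : F.ConnectedComponent → Set (Sym2 V) :=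
    fun Q => {e ∈ OPT.edgeSet | ∀ w ∈ e, w ∈ Q.supp} with hOQ
  set FQ : F.ConnectedComponent → Set (Sym2 V) :=
    fun Q => {e ∈ F.edgeSet | ∀ w ∈ e, w ∈ Q.supp} with hFQ
  -- decomposition of OPT.edgeSet
  have hAdec : OPT.edgeSet = Oout ∪ ⋃ Q ∈ Γ, OQ Q := by
    apply Set.Subset.antisymm
    · intro e he
      induction e using Sym2.ind with
      | _ u v =>
        by_cases hu : u ∈ S
        · obtain ⟨Q, hQ, huQ⟩ := (hmemS u).mp hu
          have hvQ : v ∈ Q.supp := (hsep Q hQ u v he).mp huQ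
          refine Or.inr (Set.mem_biUnion hQ ?_)
          refine ⟨he, ?_⟩
          intro w hw
          rcases Sym2.mem_iff.mp hw with rfl | rfl
          · exact huQ
          · exact hvQ
        · refine Or.inl ⟨he, ?_⟩
          intro w hw hwS
          obtain ⟨Q, hQ, hwQ⟩ := (hmemS w).mp hwS
          rcases Sym2.mem_iff.mp hw with rfl | rfl
          · exact hu hwS
          · exact hu ((hmemS u).mpr ⟨Q, hQ, (hsep Q hQ u w he).mpr hwQ⟩)
    · rintro e (he | he)
      · exact he.1
      · obtain ⟨Q, hQ, heQ⟩ := Set.mem_iUnion₂.mp he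
        exact heQ.1
  have hBdec : K.edgeSet = Oout ∪ ⋃ Q ∈ Γ, FQ Q := by
    apply Set.Subset.antisymm
    · intro e he
      induction e using Sym2.ind with
      | _ u v =>
        rcases he with ⟨h1, h2, h3⟩ | ⟨h1, h2, h3⟩
        · refine Or.inl ⟨h3, ?_⟩
          intro w hw
          rcases Sym2.mem_iff.mp hw with rfl | rfl
          · exact h1
          · exact h2
        · obtain ⟨Q, hQ, huQ⟩ := (hmemS u).mp h1
          have hvQ : v ∈ Q.supp := hFsupp Q u v h3 huQ
          refine Or.inr (Set.mem_biUnion hQ ?_)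
          refine ⟨h3, ?_⟩
          intro w hw
          rcases Sym2.mem_iff.mp hw with rfl | rfl
          · exact huQ
          · exact hvQ
    · rintro e (he | he)
      · induction e using Sym2.ind with
        | _ u v =>
          exact Or.inl ⟨he.2 u (Sym2.mem_mk_left u v), he.2 v (Sym2.mem_mk_right u v), he.1⟩
      · obtain ⟨Q, hQ, heQ⟩ := Set.mem_iUnion₂.mp he
        induction e using Sym2.ind with
        | _ u v =>
          have hu : u ∈ S := (hmemS u).mpr ⟨Q, hQ, heQ.2 u (Sym2.mem_mk_left u v)⟩
          have hv : v ∈ S := (hmemS v).mpr ⟨Q, hQ, heQ.2 v (Sym2.mem_mk_right u v)⟩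
          exact Or.inr ⟨hu, hv, heQ.1⟩
  -- disjointness facts
  have hsuppdisj : ∀ Q ∈ Γ, ∀ Q' ∈ Γ, Q ≠ Q' →
      ∀ (X Y : SimpleGraph V), Disjoint {e ∈ X.edgeSet | ∀ w ∈ e, w ∈ Q.supp}
        {e ∈ Y.edgeSet | ∀ w ∈ e, w ∈ Q'.supp} := by
    intro Q _ Q' _ hne X Y
    rw [Set.disjoint_left]
    rintro e ⟨he, hQ⟩ ⟨he', hQ'⟩
    induction e using Sym2.ind with
    | _ u v =>
      have h1 := hQ u (Sym2.mem_mk_left u v)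
      have h2 := hQ' u (Sym2.mem_mk_left u v)
      rw [SimpleGraph.ConnectedComponent.mem_supp_iff] at h1 h2
      exact hne (h1 ▸ h2 ▸ rfl)
  have houtdisj : ∀ (X : SimpleGraph V) (T : F.ConnectedComponent → Set (Sym2 V)),
      (∀ Q e, e ∈ T Q → ∀ w ∈ e, w ∈ Q.supp) →
      Disjoint Oout (⋃ Q ∈ Γ, T Q) := by
    intro X T hT
    rw [Set.disjoint_right]
    rintro e he ⟨heO, hout⟩
    obtain ⟨Q, hQ, heQ⟩ := Set.mem_iUnion₂.mp he
    induction e using Sym2.ind with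
    | _ u v =>
      exact hout u (Sym2.mem_mk_left u v)
        ((hmemS u).mpr ⟨Q, hQ, hT Q _ heQ u (Sym2.mem_mk_left u v)⟩)
  -- cardinality decompositions
  have hOcard : OPT.edgeSet.ncard = Oout.ncard + ∑ Q ∈ Γ, (OQ Q).ncard := by
    rw [hAdec, Set.ncard_union_eq (houtdisj OPT OQ (fun Q e he => he.2)) (Set.toFinite _)
      (Set.toFinite _), aux_ncard_biUnion Γ OQ (fun _ => Set.toFinite _)
      (fun Q hQ Q' hQ' hne => hsuppdisj Q hQ Q' hQ' hne OPT OPT)]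
  have hKcard' : K.edgeSet.ncard = Oout.ncard + ∑ Q ∈ Γ, (FQ Q).ncard := by
    rw [hBdec, Set.ncard_union_eq (houtdisj F FQ (fun Q e he => he.2)) (Set.toFinite _)
      (Set.toFinite _), aux_ncard_biUnion Γ FQ (fun _ => Set.toFinite _)
      (fun Q hQ Q' hQ' hne => hsuppdisj Q hQ Q' hQ' hne F F)]
  -- per-component bounds
  have hindQ : ∀ Q ∈ Γ, (OQ Q).ncard ≤ ck k (SimpleGraph.induce Q.supp F) := hind
  have hFQeq : ∀ Q : F.ConnectedComponent,
      (SimpleGraph.induce Q.supp F).edgeSet.ncard = (FQ Q).ncard := fun Q =>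
    aux_induce_edge_ncard Q.supp F
  have hckle : ∀ Q ∈ Γ, ck k (SimpleGraph.induce Q.supp F) ≤ (FQ Q).ncard := by
    intro Q _
    rw [← hFQeq Q]
    exact aux_ck_le k _
  -- arithmetic
  have hsum : ∑ Q ∈ Γ, ((SimpleGraph.induce Q.supp F).edgeSet.ncard -
      ck k (SimpleGraph.induce Q.supp F)) =
      ∑ Q ∈ Γ, (FQ Q).ncard - ∑ Q ∈ Γ, ck k (SimpleGraph.induce Q.supp F) := by
    rw [show (∑ Q ∈ Γ, ((SimpleGraph.induce Q.supp F).edgeSet.ncard -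
        ck k (SimpleGraph.induce Q.supp F))) = ∑ Q ∈ Γ, ((FQ Q).ncard -
        ck k (SimpleGraph.induce Q.supp F)) from Finset.sum_congr rfl
        (fun Q _ => by rw [hFQeq Q])]
    exact Finset.sum_tsub_distrib Γ hckle
  have hOsum : ∑ Q ∈ Γ, (OQ Q).ncard ≤ ∑ Q ∈ Γ, ck k (SimpleGraph.induce Q.supp F) :=
    Finset.sum_le_sum hindQ
  have hcksum : ∑ Q ∈ Γ, ck k (SimpleGraph.induce Q.supp F) ≤ ∑ Q ∈ Γ, (FQ Q).ncard :=
    Finset.sum_le_sum hckle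
  rw [hsum, hOcard]
  omega
end
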